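/- Let X be a topological space, let a < b be reals, I = [a,b], and let φ, ψ, ω : X → ℝ and α, β : [a,b] → ℝ be continuous functions. Assume: (i1) there is a dense subset D ⊆ [a,b] such that for each λ ∈ D the function x ↦ α(λ)φ(x) + β(λ)ψ(x) + ω(x) is inf-connected; (i2) α and β are C¹ on (a,b), α'(λ) ≠ 0 for all λ ∈ (a,b), and g := β'/α' is strictly monotone on (a,b); and either (i3) g is increasing on (a,b) and α'(λ)ψ(x) < 0 for all λ ∈ (a,b) and all x ∈ X with ψ(x) ≠ 0, or (i4) g is decreasing on (a,b) and α'(λ)ψ(x) > 0 for all λ ∈ (a,b) and all x ∈ X with ψ(x) ≠ 0. Set γ := inf_{(a,b)} g, δ := sup_{(a,b)} g, and define h : ℝ → [a,b] by h(μ) = g⁻¹(μ) if μ ∈ g((a,b)); h(μ) = a if (μ ≤ γ and (i3) holds) or (μ ≥ δ and (i4) holds); h(μ) = b if (μ ≤ γ and (i4) holds) or (μ ≥ δ and (i3) holds). Then: for every x ∈ X with ψ(x) ≠ 0, Φ(x) = α(h(−φ(x)/ψ(x)))φ(x) + β(h(−φ(x)/ψ(x)))ψ(x) + ω(x); for every x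 ∈ X with ψ(x) = 0, Φ(x) = max{α(a)φ(x), α(b)φ(x)} + ω(x); and inf_{x∈X} Φ(x) = sup_{λ∈[a,b]} inf_{x∈X} (α(λ)φ(x) + β(λ)ψ(x) + ω(x)). -/

import Mathlib

open Set Filter Topology

open Set Filter

private lemma monoOn_aux {c d : ℝ} {F G : ℝ → ℝ} (hF : ContinuousOn F (Icc c d))
    (hd : ∀ l ∈ Ioo c d, HasDerivAt F (G l) l) (hpos : ∀ l ∈ Ioo c d, 0 ≤ G l) :
    MonotoneOn F (Icc c d) := by
  apply monotoneOn_of_deriv_nonneg (convex_Icc c d) hF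
  · intro l hl
    rw [interior_Icc] at hl
    exact (hd l hl).differentiableAt.differentiableWithinAt
  · intro l hl
    rw [interior_Icc] at hl
    rw [(hd l hl).deriv]
    exact hpos l hl

private lemma antiOn_aux {c d : ℝ} {F G : ℝ → ℝ} (hF : ContinuousOn F (Icc c d))
    (hd : ∀ l ∈ Ioo c d, HasDerivAt F (G l) l) (hneg : ∀ l ∈ Ioo c d, G l ≤ 0) :
    AntitoneOn F (Icc c d) := by
  apply antitoneOn_of_deriv_nonpos (convex_Icc c d) hF
  · intro l hl
    rw [interior_Icc] at hl
    exact (hd l hl).differentiableAt.differentiableWithinAt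
  · intro l hl
    rw [interior_Icc] at hl
    rw [(hd l hl).deriv]
    exact hneg l hl

private lemma sign_aux {a b : ℝ} {u : ℝ → ℝ} (hc : ContinuousOn u (Ioo a b))
    (h0 : ∀ l ∈ Ioo a b, u l ≠ 0) :
    (∀ l ∈ Ioo a b, 0 < u l) ∨ (∀ l ∈ Ioo a b, u l < 0) := by
  by_contra hcon
  push_neg at hcon
  obtain ⟨⟨l1, hl1, hl1'⟩, ⟨l2, hl2, hl2'⟩⟩ := hcon
  have hsub : uIcc l1 l2 ⊆ Ioo a b := by
    rw [uIcc]
    exact Icc_subset_Ioo (lt_min hl1.1 hl2.1) (max_lt hl1.2 hl2.2)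
  have h0' : (0 : ℝ) ∈ uIcc (u l1) (u l2) :=
    ⟨le_trans inf_le_left hl1', le_trans hl2' le_sup_right⟩
  obtain ⟨l, hl, hul⟩ := intermediate_value_uIcc (hc.mono hsub) h0'
  exact h0 l (hsub hl) hul

private lemma tricho_aux {a b : ℝ} {g : ℝ → ℝ} (hc : ContinuousOn g (Ioo a b)) (μ : ℝ) :
    μ ∈ g '' Ioo a b ∨ (∀ l ∈ Ioo a b, μ ≤ g l) ∨ (∀ l ∈ Ioo a b, g l ≤ μ) := by
  by_contra hcon
  push_neg at hcon
  obtain ⟨h1, ⟨l1, hl1, hl1'⟩, ⟨l2, hl2, hl2'⟩⟩ := hcon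
  have hsub : uIcc l1 l2 ⊆ Ioo a b := by
    rw [uIcc]
    exact Icc_subset_Ioo (lt_min hl1.1 hl2.1) (max_lt hl1.2 hl2.2)
  have hm : μ ∈ uIcc (g l1) (g l2) :=
    ⟨le_trans inf_le_left hl1'.le, le_trans hl2'.le le_sup_right⟩
  obtain ⟨l, hl, hgl⟩ := intermediate_value_uIcc (hc.mono hsub) hm
  exact h1 ⟨l, hsub hl, hgl⟩


private lemma minimax_aux {X : Type*} [TopologicalSpace X] {a b : ℝ} (hab : a < b)
    (f : X → ℝ → ℝ)
    (hcx : ∀ l : ℝ, Continuous fun x => f x l)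
    (hcf : ∀ x : X, ContinuousOn (f x) (Icc a b))
    (hmin : ∀ x : X, ∀ p q s : ℝ, a ≤ p → p ≤ q → q ≤ s → s ≤ b →
      min (f x p) (f x s) ≤ f x q)
    (D : Set ℝ) (hD : D ⊆ Icc a b) (hDdense : Icc a b ⊆ closure D)
    (hconn : ∀ l ∈ D, ∀ r : ℝ, IsPreconnected {x : X | f x l < r}) :
    (⨅ x : X, ⨆ l ∈ Icc a b, ((f x l : ℝ) : EReal)) =
      (⨆ l ∈ Icc a b, ⨅ x : X, ((f x l : ℝ) : EReal)) := by
  refine le_antisymm ?_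
    (iSup₂_le fun l hl => le_iInf fun x => le_trans (iInf_le _ x) (le_iSup₂ (f := fun l _ => ((f x l : ℝ) : EReal)) l hl))
  by_contra hlt
  push_neg at hlt
  obtain ⟨r1, hr1l, hr1r⟩ := EReal.exists_between_coe_real hlt
  obtain ⟨r2, hr2l, hr2r⟩ := EReal.exists_between_coe_real hr1r
  have hr12 : r1 < r2 := by exact_mod_cast hr2l
  -- every sublevel set at level r1 is nonempty
  have hS : ∀ l ∈ Icc a b, ∃ x, f x l < r1 := by
    intro l hl
    have h1 : (⨅ x : X, ((f x l : ℝ) : EReal)) < (r1 : EReal) :=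
      lt_of_le_of_lt (le_iSup₂ (f := fun l _ => ⨅ x : X, ((f x l : ℝ) : EReal)) l hl) hr1l
    obtain ⟨x, hx⟩ := iInf_lt_iff.1 h1
    exact ⟨x, by exact_mod_cast hx⟩
  -- every point has a parameter with large value
  have hT : ∀ x : X, ∃ l ∈ Icc a b, r2 < f x l := by
    intro x
    have h1 : (r2 : EReal) < ⨆ l ∈ Icc a b, ((f x l : ℝ) : EReal) :=
      lt_of_lt_of_le hr2r (iInf_le _ x)
    obtain ⟨l, hl⟩ := lt_iSup_iff.1 h1
    obtain ⟨hm, hl2⟩ := lt_iSup_iff.1 hl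
    exact ⟨l, hm, by exact_mod_cast hl2⟩
  set Em : Set ℝ :=
    {l | l ∈ D ∧ ∀ x : X, f x l < r2 → ∀ ν ∈ Icc a b, r2 < f x ν → ν < l} with hEm
  set Ep : Set ℝ :=
    {l | l ∈ D ∧ ∀ x : X, f x l < r2 → ∀ ν ∈ Icc a b, r2 < f x ν → l < ν} with hEp
  have hcover : ∀ l ∈ D, l ∈ Em ∪ Ep := by
    intro l hlD
    set U : Set X := ⋃ ν ∈ Icc a b ∩ Iio l, {x | r2 < f x ν} with hU
    set V : Set X := ⋃ ν ∈ Icc a b ∩ Ioi l, {x | r2 < f x ν} with hV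
    have hUo : IsOpen U := isOpen_biUnion fun ν _ => isOpen_lt continuous_const (hcx ν)
    have hVo : IsOpen V := isOpen_biUnion fun ν _ => isOpen_lt continuous_const (hcx ν)
    have hsub : {x : X | f x l < r2} ⊆ U ∪ V := by
      intro x hx
      obtain ⟨ν, hν, hν2⟩ := hT x
      rcases lt_trichotomy ν l with hc | hc | hc
      · exact Or.inl (mem_iUnion₂.2 ⟨ν, ⟨hν, hc⟩, hν2⟩)
      · exact absurd hν2 (not_lt.2 (le_of_lt (by rw [hc]; exact hx)))
      · exact Or.inr (mem_iUnion₂.2 ⟨ν, ⟨hν, hc⟩, hν2⟩)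
    have hnot : ¬ (({x : X | f x l < r2} ∩ U).Nonempty ∧
        ({x : X | f x l < r2} ∩ V).Nonempty) := by
      rintro ⟨hEU, hEV⟩
      obtain ⟨x, hxT, hxU, hxV⟩ := hconn l hlD r2 U V hUo hVo hsub hEU hEV
      obtain ⟨ν1, hν1, hx1⟩ := mem_iUnion₂.1 hxU
      obtain ⟨ν2, hν2, hx2⟩ := mem_iUnion₂.1 hxV
      have hmm := hmin x ν1 l ν2 hν1.1.1 (le_of_lt hν1.2) (le_of_lt hν2.2) hν2.1.2
      have h2 : r2 < min (f x ν1) (f x ν2) := lt_min hx1 hx2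
      exact lt_asymm hxT (lt_of_lt_of_le h2 hmm)
    rw [not_and_or] at hnot
    rcases hnot with hE | hE
    · right
      refine ⟨hlD, fun x hx ν hν hν2 => ?_⟩
      rcases lt_trichotomy ν l with hc | hc | hc
      · exact absurd ⟨x, hx, mem_iUnion₂.2 ⟨ν, ⟨hν, hc⟩, hν2⟩⟩ hE
      · exact absurd hν2 (not_lt.2 (le_of_lt (by rw [hc]; exact hx)))
      · exact hc
    · left
      refine ⟨hlD, fun x hx ν hν hν2 => ?_⟩
      rcases lt_trichotomy ν l with hc | hc | hc
      · exact hc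
      · exact absurd hν2 (not_lt.2 (le_of_lt (by rw [hc]; exact hx)))
      · exact absurd ⟨x, hx, mem_iUnion₂.2 ⟨ν, ⟨hν, hc⟩, hν2⟩⟩ hE
  -- the closure step
  have hQm : ∀ lam ∈ Icc a b, lam ∈ closure Em →
      ∀ x : X, f x lam < r1 → ∀ ν ∈ Icc a b, r2 < f x ν → ν < lam := by
    intro lam hlam hclos x hx1 ν hν hν2
    rcases lt_trichotomy ν lam with hc | hc | hc
    · exact hc
    · rw [hc] at hν2; linarith
    · exfalso
      haveI hne : (𝓝[Em] lam).NeBot := mem_closure_iff_nhdsWithin_neBot.1 hclos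
      have hmono : 𝓝[Em] lam ≤ 𝓝[Icc a b] lam :=
        nhdsWithin_mono _ (fun t ht => hD ht.1)
      have ev1 : {t : ℝ | f x t < r2} ∈ 𝓝[Icc a b] lam :=
        (hcf x).continuousWithinAt hlam (Iio_mem_nhds (lt_trans hx1 hr12))
      have ev2 : Iio ν ∈ 𝓝[Icc a b] lam := mem_nhdsWithin_of_mem_nhds (Iio_mem_nhds hc)
      obtain ⟨t, htE, ht2, htν⟩ :=
        Filter.nonempty_of_mem (inter_mem self_mem_nhdsWithin
          (inter_mem (hmono ev1) (hmono ev2)))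
      exact lt_asymm htν (htE.2 x ht2 ν hν hν2)
  have hQp : ∀ lam ∈ Icc a b, lam ∈ closure Ep →
      ∀ x : X, f x lam < r1 → ∀ ν ∈ Icc a b, r2 < f x ν → lam < ν := by
    intro lam hlam hclos x hx1 ν hν hν2
    rcases lt_trichotomy ν lam with hc | hc | hc
    · exfalso
      haveI hne : (𝓝[Ep] lam).NeBot := mem_closure_iff_nhdsWithin_neBot.1 hclos
      have hmono : 𝓝[Ep] lam ≤ 𝓝[Icc a b] lam :=
        nhdsWithin_mono _ (fun t ht => hD ht.1)
      have ev1 : {t : ℝ | f x t < r2} ∈ 𝓝[Icc a b] lam :=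
        (hcf x).continuousWithinAt hlam (Iio_mem_nhds (lt_trans hx1 hr12))
      have ev2 : Ioi ν ∈ 𝓝[Icc a b] lam := mem_nhdsWithin_of_mem_nhds (Ioi_mem_nhds hc)
      obtain ⟨t, htE, ht2, htν⟩ :=
        Filter.nonempty_of_mem (inter_mem self_mem_nhdsWithin
          (inter_mem (hmono ev1) (hmono ev2)))
      exact lt_asymm htν (htE.2 x ht2 ν hν hν2)
    · rw [hc] at hν2; linarith
    · exact hc
  have hamem : a ∈ Icc a b := ⟨le_refl a, hab.le⟩
  have hbmem : b ∈ Icc a b := ⟨hab.le, le_refl b⟩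
  have ham : a ∉ closure Em := by
    intro hacl
    obtain ⟨x, hx⟩ := hS a hamem
    obtain ⟨ν, hν, hν2⟩ := hT x
    exact absurd (hQm a hamem hacl x hx ν hν hν2) (not_lt.2 hν.1)
  have hbp : b ∉ closure Ep := by
    intro hbcl
    obtain ⟨x, hx⟩ := hS b hbmem
    obtain ⟨ν, hν, hν2⟩ := hT x
    exact absurd (hQp b hbmem hbcl x hx ν hν hν2) (not_lt.2 hν.2)
  have hcov : Icc a b ⊆ closure Em ∪ closure Ep := by
    intro l hl
    have h1 : l ∈ closure (Em ∪ Ep) :=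
      closure_mono (fun t ht => hcover t ht) (hDdense hl)
    rwa [closure_union] at h1
  have hdisj : ∀ l ∈ Icc a b, l ∉ closure Em ∨ l ∉ closure Ep := by
    intro l hl
    by_contra hcon
    push_neg at hcon
    obtain ⟨x, hx⟩ := hS l hl
    obtain ⟨ν, hν, hν2⟩ := hT x
    exact lt_asymm (hQm l hl hcon.1 x hx ν hν hν2) (hQp l hl hcon.2 x hx ν hν hν2)
  obtain ⟨t, htI, htm, htp⟩ := isPreconnected_Icc (u := (closure Em)ᶜ) (v := (closure Ep)ᶜ)
    isClosed_closure.isOpen_compl isClosed_closure.isOpen_compl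
    (fun l hl => (hdisj l hl).elim Or.inl Or.inr)
    ⟨a, hamem, ham⟩ ⟨b, hbmem, hbp⟩
  exact (hcov htI).elim htm htp


/-- Theorem 1.1: value of the upper envelope `Φ` and the minimax equality, on a
compact interval `I = [a,b]`.  `g = β'/α'`, `h` is the (extended) inverse of `g`
as described in the statement. -/
theorem stmt0
    {X : Type*} [TopologicalSpace X]
    (a b : ℝ) (hab : a < b)
    (φ ψ ω : X → ℝ) (α β α' β' : ℝ → ℝ)
    (hφ : Continuous φ) (hψ : Continuous ψ) (hω : Continuous ω)
    (hα : ContinuousOn α (Icc a b)) (hβ : ContinuousOn β (Icc a b))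
    -- (i₁) : a dense set of parameters with inf-connected slice functions
    (D : Set ℝ) (hD : D ⊆ Icc a b) (hDdense : Icc a b ⊆ closure D)
    (hconn : ∀ l ∈ D, ∀ r : ℝ,
      IsPreconnected {x : X | α l * φ x + β l * ψ x + ω x < r})
    -- (i₂) : α, β are C¹ on (a,b), α' ≠ 0 there, and g = β'/α' is strictly monotone
    (hα' : ∀ l ∈ Ioo a b, HasDerivAt α (α' l) l)
    (hβ' : ∀ l ∈ Ioo a b, HasDerivAt β (β' l) l)
    (hα'c : ContinuousOn α' (Ioo a b)) (hβ'c : ContinuousOn β' (Ioo a b))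
    (hα'0 : ∀ l ∈ Ioo a b, α' l ≠ 0)
    (g : ℝ → ℝ) (hg : ∀ l ∈ Ioo a b, g l = β' l / α' l)
    -- the function h : ℝ → [a,b], inverting g on g((a,b))
    (h : ℝ → ℝ)
    (hhmem : ∀ μ : ℝ, h μ ∈ Icc a b)
    (hhinv : ∀ μ ∈ g '' Ioo a b, h μ ∈ Ioo a b ∧ g (h μ) = μ)
    -- (i₃) or (i₄), together with the corresponding boundary values of h
    (hcase :
      (StrictMonoOn g (Ioo a b) ∧
        (∀ l ∈ Ioo a b, ∀ x : X, ψ x ≠ 0 → α' l * ψ x < 0) ∧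
        (∀ μ : ℝ, (∀ l ∈ Ioo a b, μ ≤ g l) → h μ = a) ∧
        (∀ μ : ℝ, (∀ l ∈ Ioo a b, g l ≤ μ) → h μ = b)) ∨
      (StrictAntiOn g (Ioo a b) ∧
        (∀ l ∈ Ioo a b, ∀ x : X, ψ x ≠ 0 → 0 < α' l * ψ x) ∧
        (∀ μ : ℝ, (∀ l ∈ Ioo a b, g l ≤ μ) → h μ = a) ∧
        (∀ μ : ℝ, (∀ l ∈ Ioo a b, μ ≤ g l) → h μ = b))) :
    (∀ x : X, ψ x ≠ 0 →
      (⨆ l ∈ Icc a b, ((α l * φ x + β l * ψ x + ω x : ℝ) : EReal)) =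
        ((α (h (-(φ x / ψ x))) * φ x + β (h (-(φ x / ψ x))) * ψ x + ω x : ℝ) : EReal)) ∧
    (∀ x : X, ψ x = 0 →
      (⨆ l ∈ Icc a b, ((α l * φ x + β l * ψ x + ω x : ℝ) : EReal)) =
        ((max (α a * φ x) (α b * φ x) + ω x : ℝ) : EReal)) ∧
    (⨅ x : X, ⨆ l ∈ Icc a b, ((α l * φ x + β l * ψ x + ω x : ℝ) : EReal)) =
      (⨆ l ∈ Icc a b, ⨅ x : X, ((α l * φ x + β l * ψ x + ω x : ℝ) : EReal)) := by
  classical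
  -- continuity facts
  have cont_x : ∀ l : ℝ, Continuous (fun x => α l * φ x + β l * ψ x + ω x) :=
    fun l => ((continuous_const.mul hφ).add (continuous_const.mul hψ)).add hω
  have cont_l : ∀ x : X, ContinuousOn (fun l => α l * φ x + β l * ψ x + ω x) (Icc a b) :=
    fun x => ((hα.mul continuousOn_const).add (hβ.mul continuousOn_const)).add
      continuousOn_const
  have hder : ∀ x : X, ∀ l ∈ Ioo a b,
      HasDerivAt (fun l => α l * φ x + β l * ψ x + ω x) (α' l * φ x + β' l * ψ x) l :=
    fun x l hl => (((hα' l hl).mul_const _).add ((hβ' l hl).mul_const _)).add_const _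
  have hsing : ∀ c : ℝ, (Icc c c).Subsingleton := fun c => by
    rw [Icc_self]; exact subsingleton_singleton
  have hαsign : (∀ l ∈ Ioo a b, 0 < α' l) ∨ (∀ l ∈ Ioo a b, α' l < 0) :=
    sign_aux hα'c hα'0
  have hgc : ContinuousOn g (Ioo a b) :=
    (hβ'c.div hα'c hα'0).congr fun l hl => hg l hl
  -- the unimodality fact
  have key : ∀ x : X, ∃ l₀ ∈ Icc a b,
      MonotoneOn (fun l => α l * φ x + β l * ψ x + ω x) (Icc a l₀) ∧
      AntitoneOn (fun l => α l * φ x + β l * ψ x + ω x) (Icc l₀ b) ∧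
      (ψ x ≠ 0 → l₀ = h (-(φ x / ψ x))) ∧ (ψ x = 0 → l₀ = a ∨ l₀ = b) := by
    intro x
    by_cases hψx : ψ x = 0
    · rcases hαsign with hs | hs
      · rcases le_or_gt 0 (φ x) with hp | hp
        · refine ⟨b, ⟨hab.le, le_refl b⟩, monoOn_aux (cont_l x) (hder x) (fun l hl => ?_),
            (hsing _).antitoneOn _, fun hc => absurd hψx hc, fun _ => Or.inr rfl⟩
          show (0:ℝ) ≤ α' l * φ x + β' l * ψ x
          rw [hψx]
          nlinarith [hs l hl]
        · refine ⟨a, ⟨le_refl a, hab.le⟩, (hsing _).monotoneOn _,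
            antiOn_aux (cont_l x) (hder x) (fun l hl => ?_),
            fun hc => absurd hψx hc, fun _ => Or.inl rfl⟩
          show α' l * φ x + β' l * ψ x ≤ (0:ℝ)
          rw [hψx]
          nlinarith [hs l hl]
      · rcases le_or_gt 0 (φ x) with hp | hp
        · refine ⟨a, ⟨le_refl a, hab.le⟩, (hsing _).monotoneOn _,
            antiOn_aux (cont_l x) (hder x) (fun l hl => ?_),
            fun hc => absurd hψx hc, fun _ => Or.inl rfl⟩
          show α' l * φ x + β' l * ψ x ≤ (0:ℝ)
          rw [hψx]
          nlinarith [hs l hl]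
        · refine ⟨b, ⟨hab.le, le_refl b⟩, monoOn_aux (cont_l x) (hder x) (fun l hl => ?_),
            (hsing _).antitoneOn _, fun hc => absurd hψx hc, fun _ => Or.inr rfl⟩
          show (0:ℝ) ≤ α' l * φ x + β' l * ψ x
          rw [hψx]
          nlinarith [hs l hl]
    · have hrw : ∀ l ∈ Ioo a b, α' l * φ x + β' l * ψ x
          = (α' l * ψ x) * (g l - (-(φ x / ψ x))) := by
        intro l hl
        rw [hg l hl]
        field_simp [hα'0 l hl]
        ring
      rcases hcase with ⟨hgm, hsgn, hha, hhb⟩ | ⟨hgm, hsgn, hha, hhb⟩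
      · -- case (i₃): g strictly increasing, α' ψ < 0
        rcases tricho_aux hgc (-(φ x / ψ x)) with himg | hle | hge
        · obtain ⟨hmem, hgeq⟩ := hhinv _ himg
          refine ⟨h (-(φ x / ψ x)), hhmem _, ?_, ?_, fun _ => rfl, fun hc => absurd hc hψx⟩
          · refine monoOn_aux (G := fun l => α' l * φ x + β' l * ψ x)
              ((cont_l x).mono (Icc_subset_Icc_right hmem.2.le))
              (fun l hl => hder x l ⟨hl.1, hl.2.trans hmem.2⟩) (fun l hl => ?_)
            have hlI : l ∈ Ioo a b := ⟨hl.1, hl.2.trans hmem.2⟩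
            show (0:ℝ) ≤ α' l * φ x + β' l * ψ x
            rw [hrw l hlI]
            have h1 : g l < -(φ x / ψ x) := by
              rw [← hgeq]; exact hgm hlI hmem hl.2
            nlinarith [hsgn l hlI x hψx]
          · refine antiOn_aux (G := fun l => α' l * φ x + β' l * ψ x)
              ((cont_l x).mono (Icc_subset_Icc_left hmem.1.le))
              (fun l hl => hder x l ⟨hmem.1.trans hl.1, hl.2⟩) (fun l hl => ?_)
            have hlI : l ∈ Ioo a b := ⟨hmem.1.trans hl.1, hl.2⟩
            show α' l * φ x + β' l * ψ x ≤ (0:ℝ)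
            rw [hrw l hlI]
            have h1 : -(φ x / ψ x) < g l := by
              rw [← hgeq]; exact hgm hmem hlI hl.1
            nlinarith [hsgn l hlI x hψx]
        · have hμa : h (-(φ x / ψ x)) = a := hha _ hle
          refine ⟨h (-(φ x / ψ x)), hhmem _, ?_, ?_, fun _ => rfl, fun hc => absurd hc hψx⟩
          · rw [hμa]
            exact (hsing _).monotoneOn _
          · rw [hμa]
            refine antiOn_aux (G := fun l => α' l * φ x + β' l * ψ x) (cont_l x)
              (hder x) (fun l hl => ?_)
            show α' l * φ x + β' l * ψ x ≤ (0:ℝ)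
            rw [hrw l hl]
            nlinarith [hsgn l hl x hψx, hle l hl]
        · have hμb : h (-(φ x / ψ x)) = b := hhb _ hge
          refine ⟨h (-(φ x / ψ x)), hhmem _, ?_, ?_, fun _ => rfl, fun hc => absurd hc hψx⟩
          · rw [hμb]
            refine monoOn_aux (G := fun l => α' l * φ x + β' l * ψ x) (cont_l x)
              (hder x) (fun l hl => ?_)
            show (0:ℝ) ≤ α' l * φ x + β' l * ψ x
            rw [hrw l hl]
            nlinarith [hsgn l hl x hψx, hge l hl]
          · rw [hμb]
            exact (hsing _).antitoneOn _
      · -- case (i₄): g strictly decreasing, α' ψ > 0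
        rcases tricho_aux hgc (-(φ x / ψ x)) with himg | hle | hge
        · obtain ⟨hmem, hgeq⟩ := hhinv _ himg
          refine ⟨h (-(φ x / ψ x)), hhmem _, ?_, ?_, fun _ => rfl, fun hc => absurd hc hψx⟩
          · refine monoOn_aux (G := fun l => α' l * φ x + β' l * ψ x)
              ((cont_l x).mono (Icc_subset_Icc_right hmem.2.le))
              (fun l hl => hder x l ⟨hl.1, hl.2.trans hmem.2⟩) (fun l hl => ?_)
            have hlI : l ∈ Ioo a b := ⟨hl.1, hl.2.trans hmem.2⟩
            show (0:ℝ) ≤ α' l * φ x + β' l * ψ x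
            rw [hrw l hlI]
            have h1 : -(φ x / ψ x) < g l := by
              rw [← hgeq]; exact hgm hlI hmem hl.2
            nlinarith [hsgn l hlI x hψx]
          · refine antiOn_aux (G := fun l => α' l * φ x + β' l * ψ x)
              ((cont_l x).mono (Icc_subset_Icc_left hmem.1.le))
              (fun l hl => hder x l ⟨hmem.1.trans hl.1, hl.2⟩) (fun l hl => ?_)
            have hlI : l ∈ Ioo a b := ⟨hmem.1.trans hl.1, hl.2⟩
            show α' l * φ x + β' l * ψ x ≤ (0:ℝ)
            rw [hrw l hlI]
            have h1 : g l < -(φ x / ψ x) := by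
              rw [← hgeq]; exact hgm hmem hlI hl.1
            nlinarith [hsgn l hlI x hψx]
        · have hμb : h (-(φ x / ψ x)) = b := hhb _ hle
          refine ⟨h (-(φ x / ψ x)), hhmem _, ?_, ?_, fun _ => rfl, fun hc => absurd hc hψx⟩
          · rw [hμb]
            refine monoOn_aux (G := fun l => α' l * φ x + β' l * ψ x) (cont_l x)
              (hder x) (fun l hl => ?_)
            show (0:ℝ) ≤ α' l * φ x + β' l * ψ x
            rw [hrw l hl]
            nlinarith [hsgn l hl x hψx, hle l hl]
          · rw [hμb]
            exact (hsing _).antitoneOn _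
        · have hμa : h (-(φ x / ψ x)) = a := hha _ hge
          refine ⟨h (-(φ x / ψ x)), hhmem _, ?_, ?_, fun _ => rfl, fun hc => absurd hc hψx⟩
          · rw [hμa]
            exact (hsing _).monotoneOn _
          · rw [hμa]
            refine antiOn_aux (G := fun l => α' l * φ x + β' l * ψ x) (cont_l x)
              (hder x) (fun l hl => ?_)
            show α' l * φ x + β' l * ψ x ≤ (0:ℝ)
            rw [hrw l hl]
            nlinarith [hsgn l hl x hψx, hge l hl]
  refine ⟨?_, ?_, ?_⟩
  · -- part 1
    intro x hx
    obtain ⟨l₀, hl₀, hm, han, heq, -⟩ := key x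
    have hb2 : ∀ l ∈ Icc a b,
        α l * φ x + β l * ψ x + ω x ≤ α l₀ * φ x + β l₀ * ψ x + ω x := by
      intro l hl
      rcases le_total l l₀ with hc | hc
      · exact hm ⟨hl.1, hc⟩ ⟨hl₀.1, le_refl _⟩ hc
      · exact han ⟨le_refl _, hl₀.2⟩ ⟨hc, hl.2⟩ hc
    rw [← heq hx]
    refine le_antisymm (iSup₂_le fun l hl => EReal.coe_le_coe_iff.2 (hb2 l hl))
      (le_iSup₂ (f := fun l _ => ((α l * φ x + β l * ψ x + ω x : ℝ) : EReal)) l₀ hl₀)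
  · -- part 2
    intro x hx
    have hαm : MonotoneOn α (Icc a b) ∨ AntitoneOn α (Icc a b) := by
      rcases hαsign with hs | hs
      · exact Or.inl (monoOn_aux hα hα' (fun l hl => (hs l hl).le))
      · exact Or.inr (antiOn_aux hα hα' (fun l hl => (hs l hl).le))
    have hb2 : ∀ l ∈ Icc a b, α l * φ x ≤ max (α a * φ x) (α b * φ x) := by
      intro l hl
      rcases hαm with hs | hs
      · rcases le_or_gt 0 (φ x) with hp | hp
        · exact le_max_of_le_right
            (mul_le_mul_of_nonneg_right (hs hl ⟨hab.le, le_refl b⟩ hl.2) hp)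
        · exact le_max_of_le_left
            (mul_le_mul_of_nonpos_right (hs ⟨le_refl a, hab.le⟩ hl hl.1) hp.le)
      · rcases le_or_gt 0 (φ x) with hp | hp
        · exact le_max_of_le_left
            (mul_le_mul_of_nonneg_right (hs ⟨le_refl a, hab.le⟩ hl hl.1) hp)
        · exact le_max_of_le_right
            (mul_le_mul_of_nonpos_right (hs hl ⟨hab.le, le_refl b⟩ hl.2) hp.le)
    refine le_antisymm (iSup₂_le fun l hl => ?_) ?_
    · apply EReal.coe_le_coe_iff.2
      rw [hx, mul_zero, add_zero]
      exact add_le_add_left (hb2 l hl) _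
    · rcases le_total (α a * φ x) (α b * φ x) with hc | hc
      · rw [max_eq_right hc]
        have he : ((α b * φ x + ω x : ℝ) : EReal)
            = ((α b * φ x + β b * ψ x + ω x : ℝ) : EReal) := by
          rw [hx, mul_zero, add_zero]
        rw [he]
        exact le_iSup₂ (f := fun l _ => ((α l * φ x + β l * ψ x + ω x : ℝ) : EReal)) b
          ⟨hab.le, le_refl b⟩
      · rw [max_eq_left hc]
        have he : ((α a * φ x + ω x : ℝ) : EReal)
            = ((α a * φ x + β a * ψ x + ω x : ℝ) : EReal) := by
          rw [hx, mul_zero, add_zero]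
        rw [he]
        exact le_iSup₂ (f := fun l _ => ((α l * φ x + β l * ψ x + ω x : ℝ) : EReal)) a
          ⟨le_refl a, hab.le⟩
  · -- part 3 : minimax
    have hmin : ∀ x : X, ∀ p q s : ℝ, a ≤ p → p ≤ q → q ≤ s → s ≤ b →
        min (α p * φ x + β p * ψ x + ω x) (α s * φ x + β s * ψ x + ω x)
          ≤ α q * φ x + β q * ψ x + ω x := by
      intro x p q s h1 h2 h3 h4
      obtain ⟨l₀, hl₀, hm, han, -, -⟩ := key x
      rcases le_total q l₀ with hc | hc
      · exact min_le_of_left_le (hm ⟨h1, h2.trans hc⟩ ⟨h1.trans h2, hc⟩ h2)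
      · exact min_le_of_right_le (han ⟨hc, h3.trans h4⟩ ⟨hc.trans h3, h4⟩ h3)
    exact minimax_aux hab (fun x l => α l * φ x + β l * ψ x + ω x) cont_x cont_l hmin
      D hD hDdense hconn
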